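/- If 𝒜 is an antichain in the Boolean lattice on [n] (a family of subsets of {1,...,n} no one of which contains another), then ∑_{A∈𝒜} (n choose |A|)⁻¹ ≤ 1. -/
import Mathlib

theorem yblm_inequality (n : ℕ) (𝒜 : Finset (Finset (Fin n)))
    (h : IsAntichain (· ⊆ ·) (𝒜 : Set (Finset (Fin n)))) :
    ∑ A ∈ 𝒜, ((n.choose A.card : ℚ))⁻¹ ≤ 1 := by
  classical
  have key := Finset.sum_card_slice_div_choose_le_one (𝕜 := ℚ) (𝒜 := 𝒜) h
  rw [Fintype.card_fin] at key
  refine le_trans (le_of_eq ?_) key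
  rw [← Finset.sum_fiberwise_of_maps_to (g := Finset.card)
    (t := Finset.range (n + 1)) (fun A hA => Finset.mem_range.2
      (Nat.lt_succ_of_le (by simpa using A.card_le_univ)))]
  refine Finset.sum_congr rfl fun r hr => ?_
  have hc : (0 : ℚ) < n.choose r :=
    Nat.cast_pos.2 (Nat.choose_pos (Nat.lt_succ_iff.1 (Finset.mem_range.1 hr)))
  have : ∀ A ∈ Finset.filter (fun i => i.card = r) 𝒜, ((n.choose A.card : ℚ))⁻¹ = ((n.choose r : ℚ))⁻¹ := by
    intro A hA; rw [(Finset.mem_filter.1 hA).2]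
  rw [Finset.sum_congr rfl this, Finset.sum_const, nsmul_eq_mul,
    div_eq_mul_inv, Finset.slice]
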